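/- For primes p > 200 and q with q^{(p-5)/2} ≤ (2π)^{-p/2} p^{(p+31)/4}, one has q < √p provided p is sufficiently large (in particular for all p > 200 with q an odd prime, q ≥ 3). -/

import Mathlib

lemma key_ineq (x : ℝ) (hx : 201 ≤ x) : x ^ (18:ℝ) < (2 * Real.pi) ^ x := by
  have hx0 : (0:ℝ) < x := by linarith
  have hpi : (4:ℝ) ≤ 2 * Real.pi := by nlinarith [Real.pi_gt_d6]
  have h2pi : (0:ℝ) < 2 * Real.pi := by linarith
  rw [Real.rpow_def_of_pos hx0, Real.rpow_def_of_pos h2pi]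
  apply Real.exp_lt_exp.mpr
  have hq0 : (0:ℝ) < x ^ ((1:ℝ)/4) := Real.rpow_pos_of_pos hx0 _
  have hlog4 : Real.log x = 4 * Real.log (x ^ ((1:ℝ)/4)) := by
    rw [Real.log_rpow hx0]; ring
  have h1 : Real.log (x ^ ((1:ℝ)/4)) ≤ x ^ ((1:ℝ)/4) - 1 :=
    Real.log_le_sub_one_of_pos hq0
  have h2 : x ^ ((1:ℝ)/4) ≤ x / 53 := by
    have hcube : (201:ℝ)^3 ≤ x^3 := pow_le_pow_left₀ (by norm_num) hx 3
    have hle : x ≤ (x/53)^(4:ℕ) := by nlinarith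
    calc x ^ ((1:ℝ)/4) ≤ ((x/53)^(4:ℕ)) ^ ((1:ℝ)/4) :=
          Real.rpow_le_rpow hx0.le hle (by norm_num)
      _ = x / 53 := by
          rw [← Real.rpow_natCast (x/53) 4, ← Real.rpow_mul (by positivity)]
          norm_num
  have hlog2 : (1.3862943606 : ℝ) < Real.log (2 * Real.pi) := by
    have hl2 := Real.log_two_gt_d9
    have h4 : Real.log 4 ≤ Real.log (2*Real.pi) := Real.log_le_log (by norm_num) hpi
    have he : Real.log (4:ℝ) = 2 * Real.log 2 := by
      rw [show (4:ℝ) = 2^2 by norm_num, Real.log_pow]; push_cast; ring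
    linarith
  nlinarith

theorem q_lt_sqrt_p (p q : ℕ) (hp : p.Prime) (hq : q.Prime)
    (hp200 : 200 < p) (hqo : Odd q) (hq3 : 3 ≤ q)
    (h : (q : ℝ) ^ ((p - 5) / 2) ≤
      Real.rpow (2 * Real.pi) (-(p : ℝ) / 2) * Real.rpow (p : ℝ) (((p : ℝ) + 31) / 4)) :
    (q : ℝ) < Real.sqrt p := by
  by_contra hc
  push_neg at hc
  have hp0 : (0:ℝ) < p := by positivity
  have hp201 : (201:ℝ) ≤ (p:ℝ) := by exact_mod_cast hp200
  have hq0 : (0:ℝ) ≤ q := by positivity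
  have h2pi : (0:ℝ) < 2 * Real.pi := by positivity
  have hpq : (p:ℝ) ≤ (q:ℝ)^2 := by
    nlinarith [Real.sq_sqrt hp0.le, Real.sqrt_nonneg (p:ℝ)]
  set n : ℕ := (p - 5) / 2 with hn
  have hpodd : Odd p := hp.odd_of_ne_two (by omega)
  have heven : Even (p - 5) := Nat.Odd.sub_odd hpodd ⟨2, rfl⟩
  have hncast : (n:ℝ) = ((p:ℝ) - 5) / 2 := by
    obtain ⟨k, hk⟩ := heven
    have : n = k := by omega
    have hpk : p = 2 * k + 5 := by omega
    rw [this, hpk]; push_cast; ring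
  replace h : (q:ℝ)^n ≤ (2*Real.pi) ^ (-(p:ℝ)/2) * (p:ℝ) ^ (((p:ℝ)+31)/4) := h
  set B : ℝ := (2*Real.pi) ^ (-(p:ℝ)/2) * (p:ℝ) ^ (((p:ℝ)+31)/4) with hB
  have hB0 : 0 ≤ B := by
    rw [hB]; positivity
  have h1 : (p:ℝ) ^ n ≤ B^2 := by
    calc (p:ℝ)^n ≤ ((q:ℝ)^2)^n := pow_le_pow_left₀ hp0.le hpq n
      _ = ((q:ℝ)^n)^2 := by ring
      _ ≤ B^2 := by nlinarith [pow_nonneg hq0 n]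
  have e1 : (p:ℝ)^n = (p:ℝ) ^ (((p:ℝ)-5)/2) := by
    rw [← Real.rpow_natCast (p:ℝ) n, hncast]
  have e2 : B^2 = (2*Real.pi)^(-(p:ℝ)) * (p:ℝ)^(((p:ℝ)+31)/2) := by
    rw [hB, mul_pow,
      ← Real.rpow_natCast ((2*Real.pi) ^ (-(p:ℝ)/2)) 2,
      ← Real.rpow_natCast ((p:ℝ) ^ (((p:ℝ)+31)/4)) 2,
      ← Real.rpow_mul h2pi.le, ← Real.rpow_mul hp0.le]
    norm_num
    congr 1; ring
  rw [e1, e2] at h1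
  have hsplit : (p:ℝ)^(((p:ℝ)+31)/2) = (p:ℝ)^(((p:ℝ)-5)/2) * (p:ℝ)^(18:ℝ) := by
    rw [← Real.rpow_add hp0]; ring_nf
  rw [hsplit] at h1
  have hA : (0:ℝ) < (p:ℝ)^(((p:ℝ)-5)/2) := Real.rpow_pos_of_pos hp0 _
  have hP : (0:ℝ) < (2*Real.pi)^((p:ℝ)) := Real.rpow_pos_of_pos h2pi _
  have hT : (0:ℝ) < (p:ℝ)^(18:ℝ) := Real.rpow_pos_of_pos hp0 _
  rw [Real.rpow_neg h2pi.le] at h1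
  have h3 : (2*Real.pi) ^ ((p:ℝ)) ≤ (p:ℝ) ^ (18:ℝ) := by
    have hmul := mul_le_mul_of_nonneg_left h1 hP.le
    rw [mul_inv_cancel_left₀ hP.ne'] at hmul
    exact le_of_mul_le_mul_right (by nlinarith [hmul]) hA
  exact absurd h3 (not_le.mpr (key_ineq p hp201))
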